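/- Let (N, m0, l, A) be a bounded labeled Petri net system whose label alphabet is partitioned as A = A_L ∪ A_H, such that the T_H-induced subnet is acyclic, and let G be the basis reachability graph of (N, m0, l, A) with the low-level transitions T_L playing the role of explicit transitions and the high-level transitions T_H the role of implicit transitions. Then the LPNS is SNNI if and only if for every sequence s ∈ φ(L(G)) there exists a sequence s' ∈ L(N_L, m0) such that l(s) = l_L(s'). -/

import Mathlib

open scoped BigOperators

/-- A Petri net on places `P` and transitions `T`, given by its `Pre` and `Post` matrices. -/
structure PetriNet (P T : Type) where
  Pre : P → T → ℕ
  Post : P → T → ℕ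

namespace PetriNet

variable {P T A : Type}

/-- Incidence matrix `[N] = Post - Pre` (with values in ℤ). -/
def inc (N : PetriNet P T) (p : P) (t : T) : ℤ :=
  (N.Post p t : ℤ) - (N.Pre p t : ℤ)

/-- Transition `t` is enabled at marking `m`. -/
def enabled (N : PetriNet P T) (m : P → ℕ) (t : T) : Prop :=
  ∀ p, N.Pre p t ≤ m p

/-- Marking obtained by firing `t` at `m`. -/
def fire (N : PetriNet P T) (m : P → ℕ) (t : T) : P → ℕ :=
  fun p => m p - N.Pre p t + N.Post p t

/-- `FireSeq N m s m'` means the sequence `s` is enabled at `m` and its firing yields `m'`,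
written `m[s⟩m'`. -/
inductive FireSeq (N : PetriNet P T) : (P → ℕ) → List T → (P → ℕ) → Prop
  | nil (m : P → ℕ) : FireSeq N m [] m
  | cons {m m' : P → ℕ} {t : T} {s : List T} :
      N.enabled m t → FireSeq N (N.fire m t) s m' → FireSeq N m (t :: s) m'

/-- `L(N, m0)`: the set of firing sequences enabled at `m0`. -/
def lang (N : PetriNet P T) (m0 : P → ℕ) : Set (List T) :=
  {s | ∃ m', N.FireSeq m0 s m'}

/-- `R(N, m0)`: the set of markings reachable from `m0`. -/
def reach (N : PetriNet P T) (m0 : P → ℕ) : Set (P → ℕ) :=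
  {m | ∃ s, N.FireSeq m0 s m}

/-- A Petri net system is bounded if reachable markings are uniformly bounded. -/
def Bounded (N : PetriNet P T) (m0 : P → ℕ) : Prop :=
  ∃ k : ℕ, ∀ m ∈ N.reach m0, ∀ p, m p ≤ k

/-- The `TL`-induced subnet: same places, transitions restricted to `TL`. -/
def restrict (N : PetriNet P T) (TL : Set T) : PetriNet P {t // t ∈ TL} where
  Pre := fun p t => N.Pre p t.1
  Post := fun p t => N.Post p t.1

/-- Parikh vector of a sequence. -/
def parikh [DecidableEq T] (s : List T) : T → ℕ := fun t => s.count t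

/-- Projection of a sequence onto a subset `TL` of transitions (erasing the others). -/
def projSeq (TL : Set T) [DecidablePred (· ∈ TL)] (s : List T) : List T :=
  s.filter (fun t => decide (t ∈ TL))

/-- Σ(m,t): explanations of `t` at `m`, i.e. sequences of implicit (`TI`) transitions whose
firing at `m` enables `t`. -/
def explanations (N : PetriNet P T) (TI : Set T) (m : P → ℕ) (t : T) : Set (List T) :=
  {s | (∀ u ∈ s, u ∈ TI) ∧ ∃ m', N.FireSeq m s m' ∧ N.enabled m' t}

/-- Y(m,t): e-vectors, Parikh vectors of explanations. -/
def eVectors [DecidableEq T] (N : PetriNet P T) (TI : Set T) (m : P → ℕ) (t : T) :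
    Set (T → ℕ) :=
  parikh '' N.explanations TI m t

/-- Y_min(m,t): componentwise-minimal e-vectors. -/
def eVectorsMin [DecidableEq T] (N : PetriNet P T) (TI : Set T) (m : P → ℕ) (t : T) :
    Set (T → ℕ) :=
  {y ∈ N.eVectors TI m t | ∀ y' ∈ N.eVectors TI m t, y' ≤ y → y' = y}

/-- Σ_min(m,t): explanations with no explanation of strictly smaller Parikh vector. -/
def explanationsMin [DecidableEq T] (N : PetriNet P T) (TI : Set T) (m : P → ℕ) (t : T) :
    Set (List T) :=
  {s ∈ N.explanations TI m t |
    ¬ ∃ s' ∈ N.explanations TI m t, parikh s' ≤ parikh s ∧ parikh s' ≠ parikh s}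

/-- Paths of the basis reachability graph: `(m,(t,y),m')` is an arc whenever `t ∈ TE`,
`y ∈ Y_min(m,t)` and `m' = m + [N]_I·y + [N](·,t)` (the vector `y` is supported on `TI`,
so the sum over all transitions equals the sum over `TI`). -/
inductive BrgPath [DecidableEq T] [Fintype T] (N : PetriNet P T) (TE TI : Set T) :
    (P → ℕ) → List (T × (T → ℕ)) → (P → ℕ) → Prop
  | nil (m : P → ℕ) : BrgPath N TE TI m [] m
  | cons {m m' m'' : P → ℕ} {t : T} {y : T → ℕ} {σ : List (T × (T → ℕ))} :
      t ∈ TE → y ∈ N.eVectorsMin TI m t →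
      (∀ p, (m' p : ℤ) = (m p : ℤ) + (∑ u, (y u : ℤ) * N.inc p u) + N.inc p t) →
      BrgPath N TE TI m' σ m'' → BrgPath N TE TI m ((t, y) :: σ) m''

/-- `L(G)`: the language of the basis reachability graph. -/
def brgLang [DecidableEq T] [Fintype T] (N : PetriNet P T) (TE TI : Set T) (m0 : P → ℕ) :
    Set (List (T × (T → ℕ))) :=
  {σ | ∃ m', BrgPath N TE TI m0 σ m'}

/-- The set of basis markings: states of the BRG reachable from `m0`. -/
def brgStates [DecidableEq T] [Fintype T] (N : PetriNet P T) (TE TI : Set T) (m0 : P → ℕ) :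
    Set (P → ℕ) :=
  {m | ∃ σ, BrgPath N TE TI m0 σ m}

/-- φ(σ): concatenation of the first entries of the arcs of σ. -/
def phi (σ : List (T × (T → ℕ))) : List T := σ.map Prod.fst

/-- φ'(σ): sum of the second entries of the arcs of σ. -/
def phi' (σ : List (T × (T → ℕ))) : T → ℕ := (σ.map Prod.snd).sum

/-- Arcs of the directed bipartite graph of the `TI`-induced subnet on `P ⊕ T`. -/
def subnetArc (N : PetriNet P T) (TI : Set T) : (P ⊕ T) → (P ⊕ T) → Prop
  | Sum.inl p, Sum.inr t => t ∈ TI ∧ 0 < N.Pre p t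
  | Sum.inr t, Sum.inl p => t ∈ TI ∧ 0 < N.Post p t
  | _, _ => False

/-- The `TI`-induced subnet is acyclic: no cycle in its directed bipartite graph. -/
def SubnetAcyclic (N : PetriNet P T) (TI : Set T) : Prop :=
  ∀ x : P ⊕ T, ¬ Relation.TransGen (N.subnetArc TI) x x

/-- `L(N_L, m0)` viewed as a set of sequences over `T` (via the inclusion `T_L ↪ T`). -/
def lowLang (N : PetriNet P T) (TL : Set T) (m0 : P → ℕ) : Set (List T) :=
  (fun s => s.map Subtype.val) '' (N.restrict TL).lang m0

/-- `l_L(L(N_L, m0))`: the label language of the low-level subnet system. -/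
def lowLabelLang (N : PetriNet P T) (l : T → A) (TL : Set T) (m0 : P → ℕ) : Set (List A) :=
  (fun s => s.map fun t => l t.1) '' (N.restrict TL).lang m0

/-- SNNI: `l(P_L(L(N,m0))) = l_L(L(N_L,m0))`, where `T_L = {t | l t ∈ A_L}`. -/
def SNNI (N : PetriNet P T) (m0 : P → ℕ) (l : T → A) (AL : Set A)
    [DecidablePred fun t => l t ∈ AL] : Prop :=
  (fun s => (s.filter fun t => decide (l t ∈ AL)).map l) '' N.lang m0 =
    N.lowLabelLang l {t | l t ∈ AL} m0

end PetriNet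

namespace PetriNet

variable {P T A : Type}

lemma FireSeq.append {N : PetriNet P T} {m mi m' : P → ℕ} {s1 s2 : List T}
    (h1 : N.FireSeq m s1 mi) (h2 : N.FireSeq mi s2 m') : N.FireSeq m (s1 ++ s2) m' := by
  induction h1 with
  | nil => simpa
  | cons he _ ih => exact .cons he (ih h2)

lemma FireSeq.split {N : PetriNet P T} {m m' : P → ℕ} {s1 s2 : List T}
    (h : N.FireSeq m (s1 ++ s2) m') : ∃ mi, N.FireSeq m s1 mi ∧ N.FireSeq mi s2 m' := by
  induction s1 generalizing m with
  | nil => exact ⟨m, .nil m, h⟩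
  | cons a s ih =>
    cases h with
    | cons he h' =>
      obtain ⟨mi, hA, hB⟩ := ih h'
      exact ⟨mi, .cons he hA, hB⟩

lemma fire_int {N : PetriNet P T} {m : P → ℕ} {t : T} (h : N.enabled m t) (p : P) :
    (N.fire m t p : ℤ) = (m p : ℤ) + N.inc p t := by
  have := h p
  simp only [PetriNet.fire, PetriNet.inc]
  omega

lemma FireSeq.marking {N : PetriNet P T} {m m' : P → ℕ} {s : List T}
    (h : N.FireSeq m s m') (p : P) :
    (m' p : ℤ) = (m p : ℤ) + (s.map (N.inc p)).sum := by
  induction h with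
  | nil => simp
  | @cons m m' t s he h ih =>
    rw [List.map_cons, List.sum_cons, ih, fire_int he p]
    ring

lemma sum_parikh_mul [DecidableEq T] [Fintype T] (s : List T) (f : T → ℤ) :
    ∑ u, (parikh s u : ℤ) * f u = (s.map f).sum := by
  induction s with
  | nil => simp [parikh]
  | cons a s ih =>
    simp only [parikh, List.count_cons, beq_iff_eq, List.map_cons, List.sum_cons] at *
    have h : ∀ u, ((s.count u + if a = u then 1 else 0 : ℕ) : ℤ) * f u
        = (s.count u : ℤ) * f u + (if a = u then f u else 0) := by
      intro u; split <;> push_cast <;> ring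
    rw [Finset.sum_congr rfl fun u _ => h u, Finset.sum_add_distrib, ih,
      Finset.sum_ite_eq Finset.univ a f]
    simp [add_comm]

lemma sum_parikh [DecidableEq T] [Fintype T] (s : List T) : ∑ u, parikh s u = s.length := by
  induction s with
  | nil => simp [parikh]
  | cons a s ih =>
    simp only [parikh, List.count_cons, beq_iff_eq, List.length_cons] at *
    rw [Finset.sum_add_distrib, ih]
    simp [Finset.sum_ite_eq]

end PetriNet
namespace PetriNet

variable {P T A : Type}

lemma exists_min_explanation [DecidableEq T] [Fintype T] (N : PetriNet P T) (TI : Set T)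
    (m : P → ℕ) (t : T) {w : List T} (hw : w ∈ N.explanations TI m t) :
    ∃ w', w' ∈ N.explanations TI m t ∧ parikh w' ≤ parikh w ∧
      parikh w' ∈ N.eVectorsMin TI m t := by
  generalize hn : w.length = n
  induction n using Nat.strong_induction_on generalizing w with
  | _ n ih =>
  by_cases hmin : parikh w ∈ N.eVectorsMin TI m t
  · exact ⟨w, hw, le_refl _, hmin⟩
  · have hY : parikh w ∈ N.eVectors TI m t := ⟨w, hw, rfl⟩
    have hnm : ¬ ∀ y' ∈ N.eVectors TI m t, y' ≤ parikh w → y' = parikh w := by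
      intro hb; exact hmin ⟨hY, hb⟩
    push_neg at hnm
    obtain ⟨y', hy', hle, hne⟩ := hnm
    obtain ⟨w2, hw2, rfl⟩ := hy'
    have hex : ∃ u, parikh w2 u < parikh w u := by
      by_contra hc
      push_neg at hc
      exact hne (funext fun u => le_antisymm (hle u) (hc u))
    obtain ⟨u, hu⟩ := hex
    have hlt : w2.length < n := by
      rw [← hn, ← sum_parikh w, ← sum_parikh w2]
      exact Finset.sum_lt_sum (fun v _ => hle v) ⟨u, Finset.mem_univ u, hu⟩
    obtain ⟨w', h1, h2, h3⟩ := ih w2.length hlt hw2 rfl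
    exact ⟨w', h1, le_trans h2 hle, h3⟩

lemma filter_decomp : ∀ (s : List T) (q : T → Bool) (t : T) (rest : List T),
    s.filter q = t :: rest →
    ∃ w r, s = w ++ t :: r ∧ (∀ u ∈ w, q u = false) ∧ q t = true ∧ r.filter q = rest := by
  intro s
  induction s with
  | nil => intro q t rest h; simp at h
  | cons a s ih =>
    intro q t rest h
    by_cases hqa : q a
    · rw [List.filter_cons_of_pos hqa] at h
      obtain ⟨rfl, rfl⟩ : a = t ∧ s.filter q = rest := ⟨(List.cons.injEq ..).mp h |>.1, (List.cons.injEq ..).mp h |>.2⟩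
      exact ⟨[], s, rfl, by simp, hqa, rfl⟩
    · rw [List.filter_cons_of_neg hqa] at h
      obtain ⟨w, r, rfl, hw, hqt, hr⟩ := ih q t rest h
      exact ⟨a :: w, r, rfl, by
        intro u hu
        rcases List.mem_cons.mp hu with rfl | hu
        · exact Bool.eq_false_iff.mpr hqa
        · exact hw u hu, hqt, hr⟩

lemma restrict_fireSeq {N : PetriNet P T} {TL : Set T} :
    ∀ {m m' : P → ℕ} {s : List {t // t ∈ TL}},
      (N.restrict TL).FireSeq m s m' → N.FireSeq m (s.map Subtype.val) m' := by
  intro m m' s h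
  induction h with
  | nil => exact .nil _
  | cons he _ ih => exact .cons he ih

lemma fireSeq_restrict {N : PetriNet P T} {TL : Set T} :
    ∀ {s : List T} {m m'}, N.FireSeq m s m' → (∀ u ∈ s, u ∈ TL) →
      ∃ s' : List {t // t ∈ TL}, (N.restrict TL).FireSeq m s' m' ∧ s'.map Subtype.val = s := by
  intro s
  induction s with
  | nil => intro m m' h _; cases h; exact ⟨[], .nil _, rfl⟩
  | cons a s ih =>
    intro m m' h hmem
    cases h with
    | cons he h' =>
      obtain ⟨s', hs', hmap⟩ := ih h' (fun u hu => hmem u (List.mem_cons_of_mem a hu))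
      exact ⟨⟨a, hmem a List.mem_cons_self⟩ :: s', .cons he hs', by simp [hmap]⟩

end PetriNet
namespace PetriNet

variable {P T A : Type}

lemma fireable_of_acyclic [DecidableEq T] [Fintype T] [Fintype P]
    (N : PetriNet P T) (TI : Set T) (hacyc : N.SubnetAcyclic TI) :
    ∀ (n : ℕ) (z : T → ℕ), (∑ u, z u = n) → (∀ u, 0 < z u → u ∈ TI) →
    ∀ (m mf : P → ℕ), (∀ p, (mf p : ℤ) = m p + ∑ u, (z u : ℤ) * N.inc p u) →
    ∃ w, (∀ u ∈ w, u ∈ TI) ∧ parikh w = z ∧ N.FireSeq m w mf := by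
  intro n
  induction n with
  | zero =>
    intro z hsum _ m mf hmf
    have hz : ∀ u, z u = 0 := fun u =>
      (Finset.sum_eq_zero_iff.mp hsum) u (Finset.mem_univ u)
    have hm : mf = m := by
      funext p
      have := hmf p
      simp [hz] at this
      exact_mod_cast this
    refine ⟨[], by simp, funext fun u => by simp [parikh, hz u], ?_⟩
    rw [hm]; exact .nil m
  | succ n ih =>
    intro z hsum hsupp m mf hmf
    -- find a minimal transition in the support of z
    have hfin : Finite (P ⊕ T) := inferInstance
    haveI : IsTrans (P ⊕ T) (Relation.TransGen (N.subnetArc TI)) := inferInstance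
    haveI : IsIrrefl (P ⊕ T) (Relation.TransGen (N.subnetArc TI)) := ⟨hacyc⟩
    have hwf : WellFounded (Relation.TransGen (N.subnetArc TI)) :=
      Finite.wellFounded_of_trans_of_irrefl _
    have hSne : ∃ u, 0 < z u := by
      by_contra hc
      push_neg at hc
      have : ∑ u, z u = 0 := Finset.sum_eq_zero fun u _ => Nat.le_zero.mp (hc u)
      omega
    obtain ⟨u0, hu0⟩ := hSne
    obtain ⟨x, hxS, hxmin⟩ := hwf.has_min {x : P ⊕ T | ∃ u, x = Sum.inr u ∧ 0 < z u}
      ⟨Sum.inr u0, u0, rfl, hu0⟩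
    obtain ⟨t, rfl, ht⟩ := hxS
    -- t is enabled at m
    have hen : N.enabled m t := by
      intro p
      by_cases hpre : 0 < N.Pre p t
      · have hpost : ∀ u, 0 < z u → N.Post p u = 0 := by
          intro u hu
          by_contra hne
          have hpu : 0 < N.Post p u := Nat.pos_of_ne_zero hne
          have harc1 : N.subnetArc TI (Sum.inr u) (Sum.inl p) := ⟨hsupp u hu, hpu⟩
          have harc2 : N.subnetArc TI (Sum.inl p) (Sum.inr t) := ⟨hsupp t ht, hpre⟩
          exact hxmin (Sum.inr u) ⟨u, rfl, hu⟩
            (Relation.TransGen.trans (.single harc1) (.single harc2))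
        have hterm : ∀ u ∈ Finset.univ, (z u : ℤ) * N.inc p u ≤
            (if u = t then (z u : ℤ) * N.inc p u else 0) := by
          intro u _
          split
          · exact le_refl _
          · by_cases hu : 0 < z u
            · have hinc : N.inc p u ≤ 0 := by
                simp [PetriNet.inc, hpost u hu]
              exact mul_nonpos_of_nonneg_of_nonpos (by positivity) hinc
            · have : z u = 0 := by omega
              simp [this]
        have hsum_le : ∑ u, (z u : ℤ) * N.inc p u ≤ (z t : ℤ) * N.inc p t := by
          calc ∑ u, (z u : ℤ) * N.inc p u
              ≤ ∑ u, (if u = t then (z u : ℤ) * N.inc p u else 0) :=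
                Finset.sum_le_sum hterm
            _ = (z t : ℤ) * N.inc p t := by
                rw [Finset.sum_ite_eq' Finset.univ t (fun u => (z u : ℤ) * N.inc p u)]
                simp
        have h0 : (0 : ℤ) ≤ mf p := by positivity
        have hPt : N.Post p t = 0 := hpost t ht
        have hinc : N.inc p t = -(N.Pre p t : ℤ) := by simp [PetriNet.inc, hPt]
        have h1 : (1 : ℤ) ≤ (z t : ℤ) := by exact_mod_cast ht
        have h2 : (0 : ℤ) ≤ (N.Pre p t : ℤ) := by positivity
        have h3 : (N.Pre p t : ℤ) ≤ (z t : ℤ) * (N.Pre p t : ℤ) := by nlinarith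
        have h4 := hmf p
        rw [hinc] at hsum_le
        have : (N.Pre p t : ℤ) ≤ (m p : ℤ) := by linarith
        exact_mod_cast this
      · omega
    -- fire t and recurse
    set z' : T → ℕ := fun u => z u - if u = t then 1 else 0 with hz'
    have hzsplit : ∀ u, z u = z' u + if u = t then 1 else 0 := by
      intro u; simp only [hz']; by_cases h : u = t <;> simp [h] <;> omega
    have hsum' : ∑ u, z' u = n := by
      have h1 : ∑ u, z u = (∑ u, z' u) + ∑ u, (if u = t then 1 else 0) := by
        rw [← Finset.sum_add_distrib]
        exact Finset.sum_congr rfl fun u _ => hzsplit u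
      have h2 : ∑ u, (if u = t then (1 : ℕ) else 0) = 1 := by
        simp [Finset.sum_ite_eq']
      omega
    have hsupp' : ∀ u, 0 < z' u → u ∈ TI := by
      intro u hu
      apply hsupp
      have := hzsplit u
      omega
    have hmf' : ∀ p, (mf p : ℤ) = (N.fire m t p : ℤ) + ∑ u, (z' u : ℤ) * N.inc p u := by
      intro p
      have hterm : ∀ u, (z u : ℤ) * N.inc p u
          = (z' u : ℤ) * N.inc p u + (if u = t then N.inc p u else 0) := by
        intro u
        rw [hzsplit u]
        push_cast
        split <;> ring
      have hsplit : ∑ u, (z u : ℤ) * N.inc p u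
          = (∑ u, (z' u : ℤ) * N.inc p u) + N.inc p t := by
        rw [Finset.sum_congr rfl fun u _ => hterm u, Finset.sum_add_distrib,
          Finset.sum_ite_eq' Finset.univ t (fun u => N.inc p u)]
        simp
      rw [hmf p, hsplit, fire_int hen p]
      ring
    obtain ⟨w, hwTI, hwpar, hwfs⟩ := ih z' hsum' hsupp' (N.fire m t) mf hmf'
    refine ⟨t :: w, ?_, ?_, .cons hen hwfs⟩
    · intro u hu
      rcases List.mem_cons.mp hu with rfl | hu
      · exact hsupp u ht
      · exact hwTI u hu
    · funext u
      have hpw := congrFun hwpar u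
      simp only [parikh, List.count_cons, beq_iff_eq] at hpw ⊢
      rw [hpw]
      have h5 := hzsplit u
      by_cases h : t = u
      · subst h; simp at h5 ⊢; omega
      · have h6 : ¬ (u = t) := fun hc => h hc.symm
        simp [h, h6] at h5 ⊢; omega

end PetriNet
namespace PetriNet

variable {P T A : Type}

lemma brg_sound [DecidableEq T] [Fintype T] {N : PetriNet P T} {TE TI : Set T}
    (q : T → Bool) (hqI : ∀ u ∈ TI, q u = false) (hqE : ∀ u ∈ TE, q u = true) :
    ∀ {σ : List (T × (T → ℕ))} {m m' : P → ℕ}, BrgPath N TE TI m σ m' →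
      ∃ s, N.FireSeq m s m' ∧ s.filter q = phi σ := by
  intro σ
  induction σ with
  | nil =>
    intro m m' h
    cases h
    exact ⟨[], .nil _, rfl⟩
  | cons a σ ih =>
    intro m m'' h
    cases h with
    | cons htE hy hmeq hpath =>
      rename_i mmid t y
      obtain ⟨s, hs, hfil⟩ := ih hpath
      obtain ⟨hyv, hymin⟩ := hy
      obtain ⟨w, hw, hpw⟩ := hyv
      obtain ⟨hwTI, m1, hfw, hen⟩ := hw
      have hm2 : N.fire m1 t = mmid := by
        funext p
        have h1 := hfw.marking p
        have h2 := fire_int hen p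
        have h3 := hmeq p
        have h4 := sum_parikh_mul w (N.inc p)
        have h5 : ∀ u, ((y u : ℤ) * N.inc p u) = ((parikh w u : ℤ) * N.inc p u) := by
          intro u; rw [← hpw]
        rw [Finset.sum_congr rfl fun u _ => h5 u, h4] at h3
        have : ((N.fire m1 t p : ℕ) : ℤ) = (mmid p : ℤ) := by
          rw [h2, h1, h3]
        exact_mod_cast this
      refine ⟨w ++ t :: s, ?_, ?_⟩
      · exact FireSeq.append hfw (.cons hen (hm2 ▸ hs))
      · have hwnil : w.filter q = [] :=
          List.filter_eq_nil_iff.mpr fun u hu => by simp [hqI u (hwTI u hu)]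
        simp [List.filter_append, hwnil, List.filter_cons_of_pos (hqE t htE), hfil, phi]

lemma brg_complete [DecidableEq T] [Fintype T] [Fintype P] {N : PetriNet P T} {TE TI : Set T}
    (q : T → Bool) (hqE : ∀ u, q u = true ↔ u ∈ TE) (hqI : ∀ u, q u = false ↔ u ∈ TI)
    (hacyc : N.SubnetAcyclic TI) :
    ∀ (n : ℕ) (s : List T) (m m' : P → ℕ), (s.filter q).length ≤ n → N.FireSeq m s m' →
      ∃ σ m'', BrgPath N TE TI m σ m'' ∧ phi σ = s.filter q := by
  intro n
  induction n with
  | zero =>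
    intro s m m' hlen _
    have hnil : s.filter q = [] := List.length_eq_zero_iff.mp (Nat.le_zero.mp hlen)
    exact ⟨[], m, .nil m, by simp [phi, hnil]⟩
  | succ n ih =>
    intro s m m' hlen hfs
    cases hfil : s.filter q with
    | nil => exact ⟨[], m, .nil m, by simp [phi, hfil]⟩
    | cons t rest =>
      obtain ⟨w, r, rfl, hwq, hqt, hrest⟩ := filter_decomp s q t rest hfil
      obtain ⟨m1, hfw, htr⟩ := FireSeq.split hfs
      cases htr with
      | cons hen hrseq =>
        have hwexp : w ∈ N.explanations TI m t :=
          ⟨fun u hu => (hqI u).mp (hwq u hu), m1, hfw, hen⟩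
        obtain ⟨w', hw'exp, hle, hmin⟩ := exists_min_explanation N TI m t hwexp
        obtain ⟨hw'TI, mA, hfw', henA⟩ := hw'exp
        -- the BRG arc m --(t, parikh w')--> fire mA t
        have hmeq : ∀ p, ((N.fire mA t p : ℕ) : ℤ) =
            (m p : ℤ) + (∑ u, (parikh w' u : ℤ) * N.inc p u) + N.inc p t := by
          intro p
          rw [fire_int henA p, hfw'.marking p, sum_parikh_mul]
        -- the leftover implicit transitions
        set z : T → ℕ := fun u => parikh w u - parikh w' u with hz
        have hzc : ∀ u, ((z u : ℕ) : ℤ) = (parikh w u : ℤ) - (parikh w' u : ℤ) := by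
          intro u
          have h : parikh w' u ≤ parikh w u := hle u
          show ((parikh w u - parikh w' u : ℕ) : ℤ) = _
          omega
        have hsupp : ∀ u, 0 < z u → u ∈ TI := by
          intro u hu
          have hu' : 0 < parikh w u - parikh w' u := hu
          have hwu : 0 < parikh w u := by omega
          have : u ∈ w := List.count_pos_iff.mp hwu
          exact (hqI u).mp (hwq u this)
        have hmf : ∀ p, ((N.fire m1 t p : ℕ) : ℤ) =
            (N.fire mA t p : ℤ) + ∑ u, (z u : ℤ) * N.inc p u := by
          intro p
          have h1 := fire_int hen p
          have h2 := hfw.marking p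
          have h3 := hmeq p
          have h4 := sum_parikh_mul w (N.inc p)
          have h5 : ∑ u, (z u : ℤ) * N.inc p u
              = (∑ u, (parikh w u : ℤ) * N.inc p u)
                - ∑ u, (parikh w' u : ℤ) * N.inc p u := by
            rw [← Finset.sum_sub_distrib]
            exact Finset.sum_congr rfl fun u _ => by rw [hzc u]; ring
          rw [h1, h2, h3, h5, h4]
          ring
        obtain ⟨wr, hwrTI, hwrpar, hfwr⟩ :=
          fireable_of_acyclic N TI hacyc (∑ u, z u) z rfl hsupp (N.fire mA t) (N.fire m1 t) hmf
        have hcont : N.FireSeq (N.fire mA t) (wr ++ r) m' := FireSeq.append hfwr hrseq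
        have hwrnil : wr.filter q = [] :=
          List.filter_eq_nil_iff.mpr fun u hu => by simp [(hqI u).mpr (hwrTI u hu)]
        have hfilwr : (wr ++ r).filter q = rest := by
          rw [List.filter_append, hwrnil, hrest]
          simp
        have hlen' : ((wr ++ r).filter q).length ≤ n := by
          rw [hfilwr]
          have h6 : ((w ++ t :: r).filter q).length = rest.length + 1 := by
            rw [hfil]; simp
          omega
        obtain ⟨σ, m'', hpath, hphi⟩ := ih (wr ++ r) (N.fire mA t) m' hlen' hcont
        refine ⟨(t, parikh w') :: σ, m'', .cons ((hqE t).mp hqt) hmin hmeq hpath, ?_⟩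
        simp only [phi, List.map_cons] at hphi ⊢
        rw [hphi, hfilwr]

end PetriNet


/-- For a bounded LPNS with `A = A_L ∪ A_H` and acyclic `T_H`-induced subnet,
SNNI holds iff every `s ∈ φ(L(G))` is label-matched by some `s' ∈ L(N_L, m0)`. -/
theorem snni_iff_every_brg_sequence_matched
    {P T A : Type} [Fintype P] [Fintype T] [DecidableEq T]
    (N : PetriNet P T) (m0 : P → ℕ) (l : T → A) (AL AH : Set A)
    [DecidablePred fun t => l t ∈ AL]
    (hcover : AL ∪ AH = Set.univ) (hdisj : Disjoint AL AH)
    (hbound : N.Bounded m0)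
    (hacyc : N.SubnetAcyclic {t | l t ∈ AH}) :
    N.SNNI m0 l AL ↔
      ∀ σ ∈ N.brgLang {t | l t ∈ AL} {t | l t ∈ AH} m0,
        ∃ s' ∈ (N.restrict {t | l t ∈ AL}).lang m0,
          (PetriNet.phi σ).map l = s'.map fun t => l t.1 := by
  set q : T → Bool := fun t => decide (l t ∈ AL) with hqdef
  have hqE : ∀ u, q u = true ↔ u ∈ {t | l t ∈ AL} := by
    intro u; simp [hqdef, Set.mem_setOf_eq]
  have hqI : ∀ u, q u = false ↔ u ∈ {t | l t ∈ AH} := by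
    intro u
    simp only [hqdef, decide_eq_false_iff_not, Set.mem_setOf_eq]
    constructor
    · intro h
      have : l u ∈ AL ∪ AH := by rw [hcover]; trivial
      rcases this with h' | h'
      · exact absurd h' h
      · exact h'
    · intro h hAL
      exact Set.disjoint_left.mp hdisj hAL h
  constructor
  · -- SNNI → matching
    intro hsnni σ hσ
    obtain ⟨mend, hpath⟩ := hσ
    obtain ⟨s, hfs, hfil⟩ := PetriNet.brg_sound q
      (fun u hu => (hqI u).mpr hu) (fun u hu => (hqE u).mpr hu) hpath
    have hmem : ((s.filter q).map l) ∈
        (fun s => (s.filter fun t => decide (l t ∈ AL)).map l) '' N.lang m0 :=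
      ⟨s, ⟨mend, hfs⟩, rfl⟩
    rw [hsnni] at hmem
    obtain ⟨s', hs', heq⟩ := hmem
    exact ⟨s', hs', by rw [← hfil]; exact heq.symm⟩
  · -- matching → SNNI
    intro hmatch
    apply Set.Subset.antisymm
    · rintro x ⟨s, ⟨m', hfs⟩, rfl⟩
      obtain ⟨σ, m'', hpath, hphi⟩ := PetriNet.brg_complete q hqE hqI hacyc
        (s.filter q).length s m0 m' le_rfl hfs
      obtain ⟨s', hs', heq⟩ := hmatch σ ⟨m'', hpath⟩
      refine ⟨s', hs', ?_⟩
      show s'.map (fun t => l t.1) = (s.filter fun t => decide (l t ∈ AL)).map l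
      rw [← heq, hphi]
    · rintro x ⟨s', hs', rfl⟩
      obtain ⟨m', hfs'⟩ := hs'
      have hlift : N.FireSeq m0 (s'.map Subtype.val) m' := PetriNet.restrict_fireSeq hfs'
      refine ⟨s'.map Subtype.val, ⟨m', hlift⟩, ?_⟩
      have hall : (s'.map Subtype.val).filter q = s'.map Subtype.val :=
        List.filter_eq_self.mpr (by
          intro u hu
          obtain ⟨t', _, rfl⟩ := List.mem_map.mp hu
          exact (hqE t'.1).mpr t'.2)
      show ((s'.map Subtype.val).filter fun t => decide (l t ∈ AL)).map l
          = s'.map (fun t => l t.1)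
      rw [show ((s'.map Subtype.val).filter fun t => decide (l t ∈ AL)) = _ from hall,
        List.map_map]
      rfl
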